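/- Let G be a finite group acting on a triangulated category T (an action assigns to each g ∈ G an autoequivalence, compatibly with products), and let (X,Y) be a G-invariant t-structure, i.e. g(X) = X and g(Y) = Y for all g ∈ G. Then the pair (X^G, Y^G) of G-equivariant subcategories is a t-structure on the equivariant category T^G (assuming T^G is triangulated, e.g. T algebraic and char k = 0): Hom_{T^G}(X^G, Y^G) = 0, ΣX^G ⊆ X^G, and every G-object (t,τ) admits a truncation triangle (x,ξ) → (t,τ) → (y,μ) with (x,ξ) ∈ X^G and (y,μ) ∈ Y^G, where ξ and μ are the canonical linearisations induced by uniqueness of truncation triangles. -/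

import Mathlib

open CategoryTheory Limits Pretriangulated

universe v u

/-- A t-structure in a triangulated category `C`: a pair of strictly full (i.e. closed
under isomorphism) subcategories `(X, Y)` with `ΣX ⊆ X`, `Hom(X, Y) = 0` and truncation
triangles for every object. -/
structure TStruct (C : Type u) [Category.{v} C] [Preadditive C] [HasZeroObject C]
    [HasShift C ℤ] [∀ n : ℤ, (shiftFunctor C n).Additive] [Pretriangulated C] where
  X : Set C
  Y : Set C
  X_iso : ∀ ⦃a b : C⦄, (a ≅ b) → a ∈ X → b ∈ X
  Y_iso : ∀ ⦃a b : C⦄, (a ≅ b) → a ∈ Y → b ∈ Y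
  shift_mem : ∀ x ∈ X, x⟦(1 : ℤ)⟧ ∈ X
  hom_zero : ∀ ⦃x⦄, x ∈ X → ∀ ⦃y⦄, y ∈ Y → ∀ f : x ⟶ y, f = 0
  trunc : ∀ t : C, ∃ (x y : C) (f : x ⟶ t) (g : t ⟶ y) (h : y ⟶ x⟦(1 : ℤ)⟧),
    x ∈ X ∧ y ∈ Y ∧ Triangle.mk f g h ∈ distTriang C

variable {C : Type u} [Category.{v} C] [Preadditive C] [HasZeroObject C]
  [HasShift C ℤ] [∀ n : ℤ, (shiftFunctor C n).Additive] [Pretriangulated C]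

lemma TStruct.hom_shift_zero (S : TStruct C) {x y' : C} (hx : x ∈ S.X) (hy' : y' ∈ S.Y)
    (g : x ⟶ y'⟦(-1 : ℤ)⟧) : g = 0 := by
  have h1 : (y'⟦(-1 : ℤ)⟧)⟦(1 : ℤ)⟧ ∈ S.Y :=
    S.Y_iso ((shiftFunctorCompIsoId C (-1 : ℤ) (1 : ℤ) (by norm_num)).app y').symm hy'
  have h2 : (shiftFunctor C (1 : ℤ)).map g = 0 := S.hom_zero (S.shift_mem x hx) h1 _
  exact (shiftFunctor C (1 : ℤ)).map_injective (by simpa using h2)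

/-- Existence and uniqueness of the morphism between the `X`-parts of two truncation
triangles compatible with a given morphism of the middle objects. -/
lemma TStruct.exu_x (S : TStruct C)
    {x t y : C} {f : x ⟶ t} {p : t ⟶ y} {q : y ⟶ x⟦(1 : ℤ)⟧}
    (hT : Triangle.mk f p q ∈ distTriang C)
    {x' t' y' : C} {f' : x' ⟶ t'} {p' : t' ⟶ y'} {q' : y' ⟶ x'⟦(1 : ℤ)⟧}
    (hT' : Triangle.mk f' p' q' ∈ distTriang C)
    (hx : x ∈ S.X) (hy' : y' ∈ S.Y) (φ : t ⟶ t') :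
    ∃! a : x ⟶ x', a ≫ f' = f ≫ φ := by
  have hzero : (f ≫ φ) ≫ (Triangle.mk f' p' q').mor₂ = 0 := by
    have := S.hom_zero hx hy' (f ≫ φ ≫ p')
    exact (Category.assoc _ _ _).trans this
  obtain ⟨a, ha⟩ : ∃ a : x ⟶ x', f ≫ φ = a ≫ f' :=
    Triangle.coyoneda_exact₂ _ hT' (f ≫ φ) hzero
  refine ⟨a, ha.symm, ?_⟩
  intro a' ha'
  have h0 : (a' - a) ≫ (Triangle.mk f' p' q').invRotate.mor₂ = 0 := by
    show (a' - a) ≫ f' = 0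
    rw [Preadditive.sub_comp, ha', ← ha, sub_self]
  obtain ⟨g, hg⟩ : ∃ g : x ⟶ y'⟦(-1 : ℤ)⟧, a' - a = g ≫ (Triangle.mk f' p' q').invRotate.mor₁ :=
    Triangle.coyoneda_exact₂ _ (inv_rot_of_distTriang _ hT') (a' - a) h0
  have hg0 : g = 0 := S.hom_shift_zero hx hy' g
  rw [hg0] at hg
  exact sub_eq_zero.mp (hg.trans zero_comp)

/-- Existence and uniqueness of the morphism between the `Y`-parts of two truncation
triangles compatible with a given morphism of the middle objects. -/
lemma TStruct.exu_y (S : TStruct C)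
    {x t y : C} {f : x ⟶ t} {p : t ⟶ y} {q : y ⟶ x⟦(1 : ℤ)⟧}
    (hT : Triangle.mk f p q ∈ distTriang C)
    {x' t' y' : C} {f' : x' ⟶ t'} {p' : t' ⟶ y'} {q' : y' ⟶ x'⟦(1 : ℤ)⟧}
    (hT' : Triangle.mk f' p' q' ∈ distTriang C)
    (hx : x ∈ S.X) (hy' : y' ∈ S.Y) (φ : t ⟶ t') :
    ∃! b : y ⟶ y', p ≫ b = φ ≫ p' := by
  have hzero : (Triangle.mk f p q).mor₁ ≫ (φ ≫ p') = 0 := by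
    have := S.hom_zero hx hy' (f ≫ φ ≫ p')
    exact this
  obtain ⟨b, hb⟩ : ∃ b : y ⟶ y', φ ≫ p' = p ≫ b :=
    Triangle.yoneda_exact₂ _ hT (φ ≫ p') hzero
  refine ⟨b, hb.symm, ?_⟩
  intro b' hb'
  have h0 : (Triangle.mk f p q).mor₂ ≫ (b' - b) = 0 := by
    show p ≫ (b' - b) = 0
    rw [Preadditive.comp_sub, hb', ← hb, sub_self]
  obtain ⟨c, hc⟩ : ∃ c : x⟦(1 : ℤ)⟧ ⟶ y', b' - b = q ≫ c :=
    Triangle.yoneda_exact₃ _ hT (b' - b) h0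
  have hc0 : c = 0 := S.hom_zero (S.shift_mem x hx) hy' c
  rw [hc0, comp_zero] at hc
  exact sub_eq_zero.mp hc

section Equivariant

variable {G : Type*} [Group G]

/-- `τ` is a `G`-linearisation of `t` with respect to the (strict) action `F`. -/
def IsLinearization (F : G → C ⥤ C) (hFmul : ∀ g h : G, F (g * h) = F h ⋙ F g)
    (t : C) (τ : ∀ g : G, t ≅ (F g).obj t) : Prop :=
  ∀ g h : G, (τ (g * h)).hom =
    (τ g).hom ≫ (F g).map (τ h).hom ≫ eqToHom (by rw [hFmul g h]; rfl)

/-- A morphism `f` is equivariant with respect to linearisations `τ`, `τ'`. -/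
def IsEquivariant (F : G → C ⥤ C) {t t' : C} (τ : ∀ g : G, t ≅ (F g).obj t)
    (τ' : ∀ g : G, t' ≅ (F g).obj t') (f : t ⟶ t') : Prop :=
  ∀ g : G, f ≫ (τ' g).hom = (τ g).hom ≫ (F g).map f

/-- Proposition: a `G`-invariant t-structure `(X, Y)` induces a t-structure `(X^G, Y^G)`
on the equivariant category `T^G`: equivariant morphisms from `X`-objects to `Y`-objects
vanish, `X^G` is stable under suspension, and every `G`-object admits an equivariant
truncation triangle with linearised truncations. -/
theorem equivariant_t_structure (F : G → C ⥤ C) [Finite G]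
    (hF1 : F 1 = 𝟭 C)
    (hFmul : ∀ g h : G, F (g * h) = F h ⋙ F g)
    (hFequiv : ∀ g : G, (F g).IsEquivalence)
    (hshift : ∀ g : G, shiftFunctor C (1 : ℤ) ⋙ F g = F g ⋙ shiftFunctor C (1 : ℤ))
    -- each `F g` is exact (triangulated):
    (hdist : ∀ (g : G) {a b c : C} (f : a ⟶ b) (p : b ⟶ c) (q : c ⟶ a⟦(1 : ℤ)⟧),
      (Triangle.mk f p q ∈ distTriang C) →
      (Triangle.mk ((F g).map f) ((F g).map p)
        ((F g).map q ≫ eqToHom (congrArg (fun H : C ⥤ C => H.obj a) (hshift g)))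
          ∈ distTriang C))
    (S : TStruct C)
    -- `(X, Y)` is `G`-invariant:
    (hGX : ∀ (g : G) (x : C), x ∈ S.X ↔ (F g).obj x ∈ S.X)
    (hGY : ∀ (g : G) (y : C), y ∈ S.Y ↔ (F g).obj y ∈ S.Y) :
    -- (i) semi-orthogonality in `T^G`:
    (∀ (t t' : C) (τ : ∀ g : G, t ≅ (F g).obj t) (τ' : ∀ g : G, t' ≅ (F g).obj t'),
      IsLinearization F hFmul t τ → IsLinearization F hFmul t' τ' →
      t ∈ S.X → t' ∈ S.Y → ∀ f : t ⟶ t', IsEquivariant F τ τ' f → f = 0) ∧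
    -- (ii) `X^G` is closed under suspension:
    (∀ (t : C) (τ : ∀ g : G, t ≅ (F g).obj t), IsLinearization F hFmul t τ →
      t ∈ S.X → (t⟦(1 : ℤ)⟧ ∈ S.X) ∧
        ∃ τs : ∀ g : G, t⟦(1 : ℤ)⟧ ≅ (F g).obj (t⟦(1 : ℤ)⟧),
          IsLinearization F hFmul _ τs) ∧
    -- (iii) equivariant truncation triangles:
    (∀ (t : C) (τ : ∀ g : G, t ≅ (F g).obj t), IsLinearization F hFmul t τ →
      ∃ (x y : C) (ξ : ∀ g : G, x ≅ (F g).obj x) (μ : ∀ g : G, y ≅ (F g).obj y)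
        (f : x ⟶ t) (p : t ⟶ y) (q : y ⟶ x⟦(1 : ℤ)⟧),
        IsLinearization F hFmul x ξ ∧ IsLinearization F hFmul y μ ∧
        x ∈ S.X ∧ y ∈ S.Y ∧ (Triangle.mk f p q ∈ distTriang C) ∧
        IsEquivariant F ξ τ f ∧ IsEquivariant F τ μ p) := by
  classical
  refine ⟨?_, ?_, ?_⟩
  · intro t t' τ τ' _ _ ht ht' f _
    exact S.hom_zero ht ht' f
  · -- (ii)
    intro t τ hτ ht
    refine ⟨S.shift_mem t ht,
      ⟨fun g => (shiftFunctor C (1 : ℤ)).mapIso (τ g) ≪≫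
        eqToIso (Functor.congr_obj (hshift g).symm t), ?_⟩⟩
    intro g h
    have hcg := Functor.congr_hom (hshift g) (τ h).hom
    dsimp at hcg ⊢
    rw [hτ g h]
    simp only [Functor.map_comp, eqToHom_map, Category.assoc, hcg,
      eqToHom_trans, eqToHom_refl, Category.comp_id, Category.id_comp,
      eqToHom_trans_assoc]
  · -- (iii)
    intro t τ hτ
    obtain ⟨x, y, f, p, q, hx, hy, hT⟩ := S.trunc t
    have hX' : ∀ g : G, (F g).obj x ∈ S.X := fun g => (hGX g x).1 hx
    have hY' : ∀ g : G, (F g).obj y ∈ S.Y := fun g => (hGY g y).1 hy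
    have HX : ∀ g : G, ∃! a : x ⟶ (F g).obj x, a ≫ (F g).map f = f ≫ (τ g).hom :=
      fun g => S.exu_x hT (hdist g f p q hT) hx (hY' g) (τ g).hom
    have HXi : ∀ g : G, ∃! a : (F g).obj x ⟶ x, a ≫ f = (F g).map f ≫ (τ g).inv :=
      fun g => S.exu_x (hdist g f p q hT) hT (hX' g) hy (τ g).inv
    have HY : ∀ g : G, ∃! b : y ⟶ (F g).obj y, p ≫ b = (τ g).hom ≫ (F g).map p :=
      fun g => S.exu_y hT (hdist g f p q hT) hx (hY' g) (τ g).hom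
    have HYi : ∀ g : G, ∃! b : (F g).obj y ⟶ y, (F g).map p ≫ b = (τ g).inv ≫ p :=
      fun g => S.exu_y (hdist g f p q hT) hT (hX' g) hy (τ g).inv
    choose ξh hξ hξu using HX
    choose ξi hξi _ using HXi
    choose μh hμ hμu using HY
    choose μi hμi _ using HYi
    have hξhi : ∀ g, ξh g ≫ ξi g = 𝟙 x := by
      intro g
      refine (S.exu_x hT hT hx hy (𝟙 t)).unique ?_ (by simp)
      rw [Category.assoc, hξi g, ← Category.assoc, hξ g]
      simp
    have hξih : ∀ g, ξi g ≫ ξh g = 𝟙 ((F g).obj x) := by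
      intro g
      refine (S.exu_x (hdist g f p q hT) (hdist g f p q hT) (hX' g) (hY' g)
        (𝟙 ((F g).obj t))).unique ?_ (by simp)
      rw [Category.assoc, hξ g, ← Category.assoc, hξi g]
      simp
    have hμhi : ∀ g, μh g ≫ μi g = 𝟙 y := by
      intro g
      refine (S.exu_y hT hT hx hy (𝟙 t)).unique ?_ (by simp)
      rw [← Category.assoc, hμ g, Category.assoc, hμi g]
      simp
    have hμih : ∀ g, μi g ≫ μh g = 𝟙 ((F g).obj y) := by
      intro g
      refine (S.exu_y (hdist g f p q hT) (hdist g f p q hT) (hX' g) (hY' g)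
        (𝟙 ((F g).obj t))).unique ?_ (by simp)
      rw [← Category.assoc, hμi g, Category.assoc, hμ g]
      simp
    refine ⟨x, y, fun g => ⟨ξh g, ξi g, hξhi g, hξih g⟩,
      fun g => ⟨μh g, μi g, hμhi g, hμih g⟩, f, p, q, ?_, ?_, hx, hy, hT,
      fun g => (hξ g).symm, fun g => hμ g⟩
    · -- linearisation of ξ
      intro g h
      dsimp only
      refine ((hξu (g * h)) _ ?_).symm
      have hcf := Functor.congr_hom (hFmul g h) f
      rw [hτ g h, hcf]
      simp only [Functor.comp_map, Category.assoc, eqToHom_trans_assoc, eqToHom_refl,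
        Category.id_comp]
      rw [← Functor.map_comp_assoc, hξ h, Functor.map_comp_assoc]
      rw [← Category.assoc, ← Category.assoc, hξ g]
      simp only [Category.assoc]
    · -- linearisation of μ
      intro g h
      dsimp only
      refine ((hμu (g * h)) _ ?_).symm
      have hcp := Functor.congr_hom (hFmul g h) p
      rw [hτ g h, hcp]
      simp only [Functor.comp_map, Category.assoc, eqToHom_trans_assoc, eqToHom_refl,
        Category.id_comp]
      rw [← Category.assoc, hμ g, Category.assoc]
      rw [← Functor.map_comp_assoc, hμ h, Functor.map_comp_assoc]
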